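/- Let α > −1, a > 0 and n ∈ ℕ. Then for all x > 0, the second derivative of the generalized Laguerre function satisfies (ψ_{n,α}^a)''(x) = [(α² − 1/4)/x² − 2a²(2n + α + 1) + a⁴x²]·ψ_{n,α}^a(x). -/

import Mathlib

open Real

/-- The generalized Laguerre polynomial of order `α` and degree `n`. -/
noncomputable def laguerreL (α : ℝ) (n : ℕ) (x : ℝ) : ℝ :=
  ∑ k ∈ Finset.range (n + 1), (-1 : ℝ) ^ k *
    (Real.Gamma (n + α + 1) / (Real.Gamma (k + α + 1) * (n - k).factorial * k.factorial)) * x ^ k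

/-- The normalized generalized Laguerre polynomial. -/
noncomputable def laguerreLTilde (α : ℝ) (n : ℕ) (x : ℝ) : ℝ :=
  Real.sqrt (n.factorial / Real.Gamma (n + α + 1)) * laguerreL α n x

/-- The generalized Laguerre function of parameter `a`. -/
noncomputable def psiLag (α a : ℝ) (n : ℕ) (x : ℝ) : ℝ :=
  Real.sqrt 2 * a ^ (α + 1) * x ^ (α + 1/2) * Real.exp (-(a * x) ^ 2 / 2) *
    laguerreLTilde α n (a ^ 2 * x ^ 2)

/-! ### Auxiliary definitions and lemmas -/

/-- The `k`-th coefficient in the expansion of the Laguerre function. -/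
noncomputable def lagC (α a : ℝ) (n k : ℕ) : ℝ :=
  Real.sqrt 2 * a ^ (α + 1) * Real.sqrt (n.factorial / Real.Gamma (n + α + 1)) *
    ((-1 : ℝ) ^ k *
      (Real.Gamma (n + α + 1) / (Real.Gamma (k + α + 1) * (n - k).factorial * k.factorial)) *
      a ^ (2 * k))

/-- The Laguerre function written as a finite sum of powers times a Gaussian. -/
noncomputable def lagPsi (α a : ℝ) (n : ℕ) (x : ℝ) : ℝ :=
  ∑ k ∈ Finset.range (n + 1),
    lagC α a n k * (x ^ (α + 1/2 + 2 * (k : ℝ)) * Real.exp (-(a * x) ^ 2 / 2))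

/-- The first derivative of `lagPsi`. -/
noncomputable def lagG (α a : ℝ) (n : ℕ) (x : ℝ) : ℝ :=
  ∑ k ∈ Finset.range (n + 1),
    lagC α a n k * (((α + 1/2 + 2 * (k : ℝ)) * x ^ (α + 1/2 + 2 * (k : ℝ) - 1) -
      a ^ 2 * x ^ (α + 1/2 + 2 * (k : ℝ) + 1)) * Real.exp (-(a * x) ^ 2 / 2))

lemma div_aux1 (A G F1 F2 c1 c2 : ℝ) (hG : G ≠ 0) (hF1 : F1 ≠ 0) (hF2 : F2 ≠ 0)
    (h1 : c1 ≠ 0) (h2 : c2 ≠ 0) :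
    A / (c1 * G * F1 * (c2 * F2)) * (c2 * c1) = A / (G * F1 * F2) := by
  field_simp

lemma div_aux2 (A G F1 F2 c3 : ℝ) (hG : G ≠ 0) (hF1 : F1 ≠ 0) (hF2 : F2 ≠ 0)
    (h3 : c3 ≠ 0) :
    c3 * (A / (G * (c3 * F1) * F2)) = A / (G * F1 * F2) := by
  field_simp

lemma lagC_rec (α a : ℝ) (hα : -1 < α) (n k : ℕ) (hk : k < n) :
    lagC α a n (k + 1) * (((k : ℝ) + 1) * ((k : ℝ) + 1 + α)) =
      -(a ^ 2 * ((n : ℝ) - k) * lagC α a n k) := by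
  have hpos : (0 : ℝ) < (k : ℝ) + α + 1 := by
    have : (0 : ℝ) ≤ (k : ℝ) := Nat.cast_nonneg k
    linarith
  have hΓpos : 0 < Real.Gamma ((k : ℝ) + α + 1) := Real.Gamma_pos_of_pos hpos
  have hΓ : Real.Gamma ((k + 1 : ℕ) + α + 1) = ((k : ℝ) + α + 1) * Real.Gamma ((k : ℝ) + α + 1) := by
    push_cast
    rw [show (k : ℝ) + 1 + α + 1 = ((k : ℝ) + α + 1) + 1 by ring, Real.Gamma_add_one hpos.ne']
  have hfac1 : ((n - k).factorial : ℝ) = ((n : ℝ) - k) * ((n - (k + 1)).factorial : ℝ) := by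
    have h1 : n - k = (n - (k + 1)) + 1 := by omega
    rw [h1, Nat.factorial_succ]
    push_cast [Nat.cast_sub (by omega : k + 1 ≤ n)]
    ring
  have hfac2 : (((k + 1) : ℕ).factorial : ℝ) = ((k : ℝ) + 1) * (k.factorial : ℝ) := by
    rw [Nat.factorial_succ]; push_cast; ring
  have hnk : (0 : ℝ) < (n : ℝ) - k := by
    have : (k : ℝ) < n := by exact_mod_cast hk
    linarith
  have hkfac : (k.factorial : ℝ) ≠ 0 := by positivity
  have hnkfac : (((n - (k + 1)) : ℕ).factorial : ℝ) ≠ 0 := by positivity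
  have hk1 : ((k : ℝ) + 1) ≠ 0 := by positivity
  have e1 := div_aux1 (Real.Gamma ((n : ℝ) + α + 1)) (Real.Gamma ((k : ℝ) + α + 1))
    ((n - (k + 1)).factorial : ℝ) (k.factorial : ℝ) ((k : ℝ) + α + 1) ((k : ℝ) + 1)
    hΓpos.ne' hnkfac hkfac hpos.ne' hk1
  have e2 := div_aux2 (Real.Gamma ((n : ℝ) + α + 1)) (Real.Gamma ((k : ℝ) + α + 1))
    ((n - (k + 1)).factorial : ℝ) (k.factorial : ℝ) ((n : ℝ) - k)
    hΓpos.ne' hnkfac hkfac hnk.ne'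
  unfold lagC
  rw [hΓ, hfac1, hfac2]
  set P := Real.sqrt 2 * a ^ (α + 1) * Real.sqrt (n.factorial / Real.Gamma ((n : ℝ) + α + 1)) with hP
  linear_combination (P * (-1 : ℝ) ^ (k + 1) * a ^ (2 * (k + 1))) * e1 +
    (a ^ 2 * P * (-1 : ℝ) ^ k * a ^ (2 * k)) * e2

lemma psiLag_eq (α a : ℝ) (n : ℕ) {x : ℝ} (hx : 0 < x) :
    psiLag α a n x = lagPsi α a n x := by
  unfold psiLag lagPsi laguerreLTilde laguerreL lagC
  rw [Finset.mul_sum, Finset.mul_sum]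
  refine Finset.sum_congr rfl fun k _ => ?_
  have hxp : x ^ (α + 1/2 + 2 * (k : ℝ)) = x ^ (α + 1/2) * (x ^ 2) ^ k := by
    rw [Real.rpow_add hx]
    congr 1
    rw [show (2 : ℝ) * (k : ℝ) = ((2 * k : ℕ) : ℝ) by push_cast; ring, Real.rpow_natCast,
      pow_mul]
  rw [hxp, mul_pow, ← pow_mul]
  ring

lemma hasDerivAt_term (a p : ℝ) {x : ℝ} (hx : 0 < x) :
    HasDerivAt (fun y : ℝ => y ^ p * Real.exp (-(a * y) ^ 2 / 2))
      ((p * x ^ (p - 1) - a ^ 2 * x ^ (p + 1)) * Real.exp (-(a * x) ^ 2 / 2)) x := by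
  have h1 : HasDerivAt (fun y : ℝ => y ^ p) (p * x ^ (p - 1)) x :=
    Real.hasDerivAt_rpow_const (Or.inl hx.ne')
  have h2 : HasDerivAt (fun y : ℝ => -(a * y) ^ 2 / 2) (-(a ^ 2 * x)) x := by
    have h := ((((hasDerivAt_id x).const_mul a).pow 2).neg).div_const 2
    refine h.congr_deriv ?_
    simp
    ring
  have h := h1.mul h2.exp
  refine h.congr_deriv ?_
  rw [Real.rpow_add_one hx.ne']
  ring

lemma hasDerivAt_term2 (a p : ℝ) {x : ℝ} (hx : 0 < x) :
    HasDerivAt (fun y : ℝ => (p * y ^ (p - 1) - a ^ 2 * y ^ (p + 1)) * Real.exp (-(a * y) ^ 2 / 2))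
      ((p * (p - 1) * x ^ (p - 2) - a ^ 2 * (2 * p + 1) * x ^ p + a ^ 4 * x ^ (p + 2)) *
        Real.exp (-(a * x) ^ 2 / 2)) x := by
  have h1 := (hasDerivAt_term a (p - 1) hx).const_mul p
  have h2 := (hasDerivAt_term a (p + 1) hx).const_mul (a ^ 2)
  have h := h1.sub h2
  have hfe : (fun y : ℝ => (p * y ^ (p - 1) - a ^ 2 * y ^ (p + 1)) * Real.exp (-(a * y) ^ 2 / 2)) =
      fun y : ℝ => p * (y ^ (p - 1) * Real.exp (-(a * y) ^ 2 / 2)) -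
        a ^ 2 * (y ^ (p + 1) * Real.exp (-(a * y) ^ 2 / 2)) := by
    funext y; ring
  rw [hfe]
  refine h.congr_deriv ?_
  rw [show p - 1 - 1 = p - 2 by ring, show p - 1 + 1 = p by ring,
    show p + 1 - 1 = p by ring, show p + 1 + 1 = p + 2 by ring]
  ring

lemma hasDerivAt_lagPsi (α a : ℝ) (n : ℕ) {x : ℝ} (hx : 0 < x) :
    HasDerivAt (lagPsi α a n) (lagG α a n x) x := by
  unfold lagPsi lagG
  exact HasDerivAt.fun_sum fun k _ => (hasDerivAt_term a (α + 1/2 + 2 * (k : ℝ)) hx).const_mul _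

lemma hasDerivAt_lagG (α a : ℝ) (n : ℕ) {x : ℝ} (hx : 0 < x) :
    HasDerivAt (lagG α a n)
      (∑ k ∈ Finset.range (n + 1),
        lagC α a n k * (((α + 1/2 + 2 * (k : ℝ)) * (α + 1/2 + 2 * (k : ℝ) - 1) *
            x ^ (α + 1/2 + 2 * (k : ℝ) - 2) -
          a ^ 2 * (2 * (α + 1/2 + 2 * (k : ℝ)) + 1) * x ^ (α + 1/2 + 2 * (k : ℝ)) +
          a ^ 4 * x ^ (α + 1/2 + 2 * (k : ℝ) + 2)) * Real.exp (-(a * x) ^ 2 / 2))) x := by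
  unfold lagG
  exact HasDerivAt.fun_sum fun k _ => (hasDerivAt_term2 a (α + 1/2 + 2 * (k : ℝ)) hx).const_mul _

lemma sum_identity (α a : ℝ) (hα : -1 < α) (n : ℕ) (x : ℝ) :
    ∑ k ∈ Finset.range (n + 1), lagC α a n k *
      (4 * (k : ℝ) * ((k : ℝ) + α) * x ^ (α + 1/2 + 2 * (k : ℝ) - 2) +
        4 * a ^ 2 * ((n : ℝ) - (k : ℝ)) * x ^ (α + 1/2 + 2 * (k : ℝ))) = 0 := by
  have key : ∀ A B : ℕ → ℝ, A 0 = 0 → B n = 0 → (∀ k < n, A (k + 1) + B k = 0) →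
      (∑ k ∈ Finset.range (n + 1), (A k + B k)) = 0 := by
    intro A B hA0 hBn hAB
    rw [Finset.sum_add_distrib, Finset.sum_range_succ' A, Finset.sum_range_succ B, hA0, hBn,
      add_zero, add_zero, ← Finset.sum_add_distrib]
    exact Finset.sum_eq_zero fun k hk => hAB k (Finset.mem_range.mp hk)
  have h := key
    (fun k => lagC α a n k * (4 * (k : ℝ) * ((k : ℝ) + α) * x ^ (α + 1/2 + 2 * (k : ℝ) - 2)))
    (fun k => lagC α a n k * (4 * a ^ 2 * ((n : ℝ) - (k : ℝ)) * x ^ (α + 1/2 + 2 * (k : ℝ))))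
    (by norm_num)
    (by norm_num)
    (fun k hk => by
      have hexp : α + 1/2 + 2 * (((k + 1 : ℕ)) : ℝ) - 2 = α + 1/2 + 2 * (k : ℝ) := by
        push_cast; ring
      simp only [hexp]
      have hrec := lagC_rec α a hα n k hk
      push_cast
      linear_combination (4 * x ^ (α + 1/2 + 2 * (k : ℝ))) * hrec)
  calc ∑ k ∈ Finset.range (n + 1), lagC α a n k *
      (4 * (k : ℝ) * ((k : ℝ) + α) * x ^ (α + 1/2 + 2 * (k : ℝ) - 2) +
        4 * a ^ 2 * ((n : ℝ) - (k : ℝ)) * x ^ (α + 1/2 + 2 * (k : ℝ)))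
      = ∑ k ∈ Finset.range (n + 1),
        (lagC α a n k * (4 * (k : ℝ) * ((k : ℝ) + α) * x ^ (α + 1/2 + 2 * (k : ℝ) - 2)) +
         lagC α a n k * (4 * a ^ 2 * ((n : ℝ) - (k : ℝ)) * x ^ (α + 1/2 + 2 * (k : ℝ)))) :=
        Finset.sum_congr rfl fun k _ => by ring
    _ = 0 := h

theorem stmt19 (α a : ℝ) (hα : -1 < α) (ha : 0 < a) (n : ℕ) :
    ∀ x > (0 : ℝ),
      deriv (deriv (psiLag α a n)) x =
        ((α ^ 2 - 1/4) / x ^ 2 - 2 * a ^ 2 * (2 * n + α + 1) + a ^ 4 * x ^ 2) *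
          psiLag α a n x := by
  intro x hx
  -- the derivative of `psiLag` agrees with `lagG` near `x`
  have hderiv_eq : deriv (psiLag α a n) =ᶠ[nhds x] lagG α a n := by
    refine Filter.eventuallyEq_of_mem (Ioi_mem_nhds hx) fun y hy => ?_
    have hy' : (0 : ℝ) < y := hy
    have hev : psiLag α a n =ᶠ[nhds y] lagPsi α a n :=
      Filter.eventuallyEq_of_mem (Ioi_mem_nhds hy') fun z hz => psiLag_eq α a n hz
    exact ((hasDerivAt_lagPsi α a n hy').congr_of_eventuallyEq hev).deriv
  rw [hderiv_eq.deriv_eq, (hasDerivAt_lagG α a n hx).deriv]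
  -- per-term algebraic identity
  have key : ∀ k ∈ Finset.range (n + 1),
      lagC α a n k * (((α + 1/2 + 2 * (k : ℝ)) * (α + 1/2 + 2 * (k : ℝ) - 1) *
          x ^ (α + 1/2 + 2 * (k : ℝ) - 2) -
        a ^ 2 * (2 * (α + 1/2 + 2 * (k : ℝ)) + 1) * x ^ (α + 1/2 + 2 * (k : ℝ)) +
        a ^ 4 * x ^ (α + 1/2 + 2 * (k : ℝ) + 2)) * Real.exp (-(a * x) ^ 2 / 2)) =
      ((α ^ 2 - 1/4) / x ^ 2 - 2 * a ^ 2 * (2 * n + α + 1) + a ^ 4 * x ^ 2) *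
        (lagC α a n k * (x ^ (α + 1/2 + 2 * (k : ℝ)) * Real.exp (-(a * x) ^ 2 / 2))) +
      (lagC α a n k *
        (4 * (k : ℝ) * ((k : ℝ) + α) * x ^ (α + 1/2 + 2 * (k : ℝ) - 2) +
          4 * a ^ 2 * ((n : ℝ) - (k : ℝ)) * x ^ (α + 1/2 + 2 * (k : ℝ)))) *
        Real.exp (-(a * x) ^ 2 / 2) := by
    intro k _
    have h2 : x ^ (2 : ℝ) = x ^ 2 := by
      rw [show (2 : ℝ) = ((2 : ℕ) : ℝ) by norm_num, Real.rpow_natCast]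
    have e1 : x ^ (α + 1/2 + 2 * (k : ℝ) - 2) = x ^ (α + 1/2 + 2 * (k : ℝ)) / x ^ 2 := by
      rw [Real.rpow_sub hx, h2]
    have e2 : x ^ (α + 1/2 + 2 * (k : ℝ) + 2) = x ^ (α + 1/2 + 2 * (k : ℝ)) * x ^ 2 := by
      rw [Real.rpow_add hx, h2]
    rw [e1, e2]
    field_simp
    ring
  rw [Finset.sum_congr rfl key, Finset.sum_add_distrib, ← Finset.mul_sum, ← Finset.sum_mul,
    sum_identity α a hα n x, zero_mul, add_zero, psiLag_eq α a n hx]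
  rfl
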